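/- If T : ℕ → ℝ≥0 satisfies T(n₀) < n₀ + 1 for some n₀ ∈ ℕ, then the problem of deciding whether a given (one-tape or multi-tape) Turing machine runs in time T is decidable. -/

import Mathlib

open scoped NNReal

/-- A description (code) of a deterministic Turing machine with a read-only input tape and
one binary work tape: the entry at index `4·s + 2·a + b` of the list (if any) gives, for
state `s`, input symbol `a` and work symbol `b`, the new state, the symbol written on the
work tape, and the movement directions (`true` = right) of the input and work heads.
States with a missing entry are halting. -/
abbrev Machine : Type := List (ℕ × Bool × Bool × Bool)

namespace Machine

/-- The symbol in cell `i` of the input tape carrying input `w` (blank = `false`). -/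
def read (w : List Bool) (i : ℤ) : Bool :=
  if 0 ≤ i then w.getD i.toNat false else false

/-- Configurations: current state, input head position, work tape, work head position. -/
abbrev Cfg : Type := ℕ × ℤ × (ℤ → Bool) × ℤ

/-- One computation step; `none` if the machine has halted. -/
def step (m : Machine) (w : List Bool) (c : Cfg) : Option Cfg :=
  match m[4 * c.1 + (cond (read w c.2.1) 2 0) + (cond (c.2.2.1 c.2.2.2) 1 0)]? with
  | none => none
  | some (s', wr, di, dw) =>
      some (s', c.2.1 + (if di then 1 else -1),
        Function.update c.2.2.1 c.2.2.2 wr, c.2.2.2 + (if dw then 1 else -1))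

/-- The configuration reached after `t` steps on input `w` (`none` once halted). -/
def cfgAt (m : Machine) (w : List Bool) : ℕ → Option Cfg
  | 0 => some (0, 0, fun _ => false, 0)
  | t + 1 => (cfgAt m w t).bind (step m w)

/-- `m` runs in time `T`: on every input `w` it halts after at most `T(|w|)` steps. -/
def RunsInTime (m : Machine) (T : ℕ → ℝ≥0) : Prop :=
  ∀ w : List Bool, ∃ t : ℕ, (t : ℝ≥0) ≤ T w.length ∧ cfgAt m w (t + 1) = none

end Machine

namespace Stmt15

open Machine

/-! ### basic read lemmas -/

theorem read_natCast (w : List Bool) (j : ℕ) : read w (j : ℤ) = w.getD j false := by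
  simp [Machine.read]

theorem read_neg (w : List Bool) {i : ℤ} (h : i < 0) : read w i = false := by
  simp [Machine.read, not_le.2 h]

theorem step_eq_none_iff (m : Machine) (w : List Bool) (d : Cfg) :
    step m w d = none ↔
      m[4 * d.1 + (cond (read w d.2.1) 2 0) + (cond (d.2.2.1 d.2.2.2) 1 0)]? = none := by
  rcases hq : m[4 * d.1 + (cond (read w d.2.1) 2 0) + (cond (d.2.2.1 d.2.2.2) 1 0)]?
      with _ | q
  · simp [Machine.step, hq]
  · obtain ⟨s', wr, di, dw⟩ := q
    simp [Machine.step, hq]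

/-! ### abstract lemmas -/

theorem cfgAt_none_mono (m : Machine) (w : List Bool) {a b : ℕ} (hab : a ≤ b)
    (h : cfgAt m w a = none) : cfgAt m w b = none := by
  obtain ⟨k, rfl⟩ := Nat.exists_eq_add_of_le hab
  clear hab
  induction k with
  | zero => exact h
  | succ k ih => rw [show a + (k+1) = (a+k) + 1 from rfl, cfgAt, ih]; rfl

theorem pos_le (m : Machine) (w : List Bool) :
    ∀ t : ℕ, ∀ d : Cfg, cfgAt m w t = some d → d.2.1 ≤ (t : ℤ) := by
  intro t
  induction t with
  | zero => intro d hd; simp only [Machine.cfgAt] at hd; cases hd; simp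
  | succ t ih =>
    intro d hd
    simp only [Machine.cfgAt] at hd
    rcases h : cfgAt m w t with _ | d'
    · rw [h] at hd; exact absurd hd (by simp)
    · rw [h] at hd
      simp only [Option.bind_some] at hd
      have hp := ih d' h
      rcases hq : m[4 * d'.1 + (cond (read w d'.2.1) 2 0)
          + (cond (d'.2.2.1 d'.2.2.2) 1 0)]? with _ | q
      · rw [(step_eq_none_iff m w d').2 hq] at hd; exact absurd hd (by simp)
      · obtain ⟨s', wr, di, dw⟩ := q
        simp only [Machine.step, hq, Option.some.injEq] at hd
        subst hd
        push_cast
        rcases di <;> simp <;> omega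

theorem cfgAt_congr_read (m : Machine) (w w' : List Bool) (N : ℕ)
    (h : ∀ i : ℤ, i < (N : ℤ) → read w i = read w' i) :
    ∀ t : ℕ, t ≤ N → cfgAt m w t = cfgAt m w' t := by
  intro t
  induction t with
  | zero => intro _; rfl
  | succ t ih =>
    intro ht
    simp only [Machine.cfgAt]
    rw [ih (by omega)]
    rcases hc : cfgAt m w' t with _ | d
    · rfl
    · simp only [Option.bind_some]
      have hp := pos_le m w' t d hc
      have hr : read w d.2.1 = read w' d.2.1 := h d.2.1 (by omega)
      unfold Machine.step
      rw [hr]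

theorem cfgAt_congr_read_all (m : Machine) (w w' : List Bool)
    (h : ∀ i : ℤ, read w i = read w' i) (t : ℕ) : cfgAt m w t = cfgAt m w' t :=
  cfgAt_congr_read m w w' t (fun i _ => h i) t le_rfl

theorem step_none_mono (m : Machine) (v w : List Bool)
    (hmono : ∀ i : ℤ, read v i = true → read w i = true) (d : Cfg)
    (h : step m v d = none) : step m w d = none := by
  have hle : 4 * d.1 + (cond (read v d.2.1) 2 0) + (cond (d.2.2.1 d.2.2.2) 1 0)
      ≤ 4 * d.1 + (cond (read w d.2.1) 2 0) + (cond (d.2.2.1 d.2.2.2) 1 0) := by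
    rcases hv : read v d.2.1 with _ | _
    · rcases read w d.2.1 <;> simp
    · rw [hmono _ hv]
  rw [step_eq_none_iff] at h ⊢
  rw [List.getElem?_eq_none_iff] at h ⊢
  exact le_trans h hle

/-! ### concrete simulator -/

abbrev Cfg2 : Type := ℕ × (List Bool × List Bool) × (List Bool × List Bool)

def peek (l : List Bool) : Bool := l.head?.getD false

def step2 (m : Machine) (c : Cfg2) : Option Cfg2 :=
  (m[4 * c.1 + (cond (peek c.2.1.2) 2 0) + (cond (peek c.2.2.2) 1 0)]?).map
    fun q => (q.1,
      (cond q.2.2.1 (peek c.2.1.2 :: c.2.1.1, c.2.1.2.tail)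
        (c.2.1.1.tail, peek c.2.1.1 :: c.2.1.2)),
      (cond q.2.2.2 (q.2.1 :: c.2.2.1, c.2.2.2.tail)
        (c.2.2.1.tail, peek c.2.2.1 :: q.2.1 :: c.2.2.2.tail)))

def cfg2At (m : Machine) (w : List Bool) : ℕ → Option Cfg2
  | 0 => some (0, ([], w), ([], []))
  | t + 1 => (cfg2At m w t).bind (step2 m)

/-- `(l, r)` represents the tape `F` with the head at absolute position `p`. -/
def Track (F : ℤ → Bool) (l r : List Bool) (p : ℤ) : Prop :=
  (∀ j : ℕ, r.getD j false = F (p + j)) ∧ (∀ j : ℕ, l.getD j false = F (p - 1 - j))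

theorem peek_eq (l : List Bool) : peek l = l.getD 0 false := by cases l <;> rfl

theorem tail_getD (l : List Bool) (j : ℕ) : l.tail.getD j false = l.getD (j + 1) false := by
  cases l <;> simp

theorem Track.peekEq {F : ℤ → Bool} {l r : List Bool} {p : ℤ} (h : Track F l r p) :
    peek r = F p := by
  rw [peek_eq]
  simpa using h.1 0

theorem Track.right {F : ℤ → Bool} {l r : List Bool} {p : ℤ} (h : Track F l r p) :
    Track F (peek r :: l) r.tail (p + 1) := by
  have hpk := h.peekEq
  obtain ⟨hr, hl⟩ := h
  constructor
  · intro j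
    rw [tail_getD, hr (j + 1)]
    congr 1
    push_cast
    ring
  · intro j
    cases j with
    | zero => rw [List.getD_cons_zero, hpk]; congr 1; push_cast; ring
    | succ j => rw [List.getD_cons_succ, hl j]; congr 1; push_cast; ring

theorem Track.left {F : ℤ → Bool} {l r : List Bool} {p : ℤ} (h : Track F l r p) :
    Track F l.tail (peek l :: r) (p - 1) := by
  obtain ⟨hr, hl⟩ := h
  constructor
  · intro j
    cases j with
    | zero =>
      rw [List.getD_cons_zero, peek_eq]
      have := hl 0
      simp only [Nat.cast_zero] at this ⊢
      rw [this]
      ring_nf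
    | succ j => rw [List.getD_cons_succ, hr j]; congr 1; push_cast; ring
  · intro j
    rw [tail_getD, hl (j + 1)]
    congr 1; push_cast; ring

theorem Track.write {F : ℤ → Bool} {l r : List Bool} {p : ℤ} (h : Track F l r p) (b : Bool) :
    Track (Function.update F p b) l (b :: r.tail) p := by
  obtain ⟨hr, hl⟩ := h
  constructor
  · intro j
    cases j with
    | zero =>
      rw [List.getD_cons_zero]
      simp [Function.update]
    | succ j =>
      rw [List.getD_cons_succ, tail_getD, hr (j + 1)]
      rw [Function.update_of_ne (by push_cast; omega)]
  · intro j
    rw [hl j, Function.update_of_ne (by push_cast; omega)]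

/-- The simulation relation between concrete and abstract configurations. -/
def Rel (w : List Bool) (c : Cfg2) (d : Cfg) : Prop :=
  c.1 = d.1 ∧ Track (read w) c.2.1.1 c.2.1.2 d.2.1 ∧ Track d.2.2.1 c.2.2.1 c.2.2.2 d.2.2.2

theorem stepSim {m : Machine} {w : List Bool} {c : Cfg2} {d : Cfg} (h : Rel w c d) :
    (step2 m c = none ∧ step m w d = none) ∨
      ∃ c' d', step2 m c = some c' ∧ step m w d = some d' ∧ Rel w c' d' := by
  obtain ⟨hs, hi, hw⟩ := h
  have hp1 : peek c.2.1.2 = read w d.2.1 := hi.peekEq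
  have hp2 : peek c.2.2.2 = d.2.2.1 d.2.2.2 := hw.peekEq
  have hidx : 4 * c.1 + (cond (peek c.2.1.2) 2 0) + (cond (peek c.2.2.2) 1 0)
      = 4 * d.1 + (cond (read w d.2.1) 2 0) + (cond (d.2.2.1 d.2.2.2) 1 0) := by
    rw [hs, hp1, hp2]
  rcases hq : m[4 * d.1 + (cond (read w d.2.1) 2 0) + (cond (d.2.2.1 d.2.2.2) 1 0)]?
      with _ | q
  · left
    constructor
    · rw [step2, hidx, hq]; rfl
    · exact (step_eq_none_iff m w d).2 hq
  · obtain ⟨s', wr, di, dw⟩ := q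
    right
    refine ⟨(s',
      (cond di (peek c.2.1.2 :: c.2.1.1, c.2.1.2.tail)
        (c.2.1.1.tail, peek c.2.1.1 :: c.2.1.2)),
      (cond dw (wr :: c.2.2.1, c.2.2.2.tail)
        (c.2.2.1.tail, peek c.2.2.1 :: wr :: c.2.2.2.tail))),
      (s', d.2.1 + (if di then 1 else -1),
        Function.update d.2.2.1 d.2.2.2 wr, d.2.2.2 + (if dw then 1 else -1)),
      ?_, ?_, ?_⟩
    · rw [step2, hidx, hq]; rfl
    · simp only [Machine.step, hq]
    · refine ⟨rfl, ?_, ?_⟩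
      · -- input tape
        rcases di with _ | _
        · rw [show d.2.1 + (if (false : Bool) then (1:ℤ) else -1) = d.2.1 - 1 from by simp [sub_eq_add_neg]]
          exact hi.left
        · rw [show d.2.1 + (if (true : Bool) then (1:ℤ) else -1) = d.2.1 + 1 from by simp]
          exact hi.right
      · -- work tape
        have hwr := hw.write wr
        rcases dw with _ | _
        · rw [show d.2.2.2 + (if (false : Bool) then (1:ℤ) else -1) = d.2.2.2 - 1 from by simp [sub_eq_add_neg]]
          exact hwr.left
        · rw [show d.2.2.2 + (if (true : Bool) then (1:ℤ) else -1) = d.2.2.2 + 1 from by simp]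
          exact hwr.right

theorem simNone (m : Machine) (w : List Bool) :
    ∀ t : ℕ, (cfg2At m w t = none ∧ cfgAt m w t = none) ∨
      ∃ c d, cfg2At m w t = some c ∧ cfgAt m w t = some d ∧ Rel w c d := by
  intro t
  induction t with
  | zero =>
    right
    refine ⟨_, _, rfl, rfl, rfl, ?_, ?_⟩
    · constructor
      · intro j
        simp only [zero_add]
        rw [read_natCast]
      · intro j
        rw [List.getD_nil, read_neg _ (show (0:ℤ) - 1 - (j:ℤ) < 0 by omega)]
    · constructor
      · intro j; simp
      · intro j; simp
  | succ t ih =>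
    rw [cfg2At, Machine.cfgAt]
    rcases ih with ⟨h1, h2⟩ | ⟨c, d, h1, h2, hrel⟩
    · rw [h1, h2]; left; exact ⟨rfl, rfl⟩
    · rw [h1, h2]
      simp only [Option.bind_some]
      exact stepSim hrel

theorem cfgAt_none_iff (m : Machine) (w : List Bool) (t : ℕ) :
    cfgAt m w t = none ↔ cfg2At m w t = none := by
  rcases simNone m w t with ⟨h1, h2⟩ | ⟨c, d, h1, h2, _⟩
  · simp [h1, h2]
  · simp [h1, h2]

/-! ### computability of the simulator -/

section Primrec

open Primrec

theorem peek_primrec {α : Type} [Primcodable α] {f : α → List Bool} (hf : Primrec f) :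
    Primrec fun a => peek (f a) :=
  option_getD.comp (list_head?.comp hf) (const false)

theorem step2_primrec : Primrec₂ step2 := by
  have fstM : Primrec fun a : Machine × Cfg2 => a.1 := fst
  have st : Primrec fun a : Machine × Cfg2 => a.2.1 := fst.comp snd
  have itp : Primrec fun a : Machine × Cfg2 => a.2.2.1 := fst.comp (snd.comp snd)
  have wtp : Primrec fun a : Machine × Cfg2 => a.2.2.2 := snd.comp (snd.comp snd)
  have li : Primrec fun a : Machine × Cfg2 => a.2.2.1.1 := fst.comp itp
  have ri : Primrec fun a : Machine × Cfg2 => a.2.2.1.2 := snd.comp itp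
  have lw : Primrec fun a : Machine × Cfg2 => a.2.2.2.1 := fst.comp wtp
  have rw' : Primrec fun a : Machine × Cfg2 => a.2.2.2.2 := snd.comp wtp
  have hidx : Primrec fun a : Machine × Cfg2 =>
      4 * a.2.1 + (cond (peek a.2.2.1.2) 2 0) + (cond (peek a.2.2.2.2) 1 0) :=
    nat_add.comp
      (nat_add.comp (nat_mul.comp (const 4) st)
        (Primrec.cond (peek_primrec ri) (const 2) (const 0)))
      (Primrec.cond (peek_primrec rw') (const 1) (const 0))
  have hget : Primrec fun a : Machine × Cfg2 =>
      a.1[4 * a.2.1 + (cond (peek a.2.2.1.2) 2 0) + (cond (peek a.2.2.2.2) 1 0)]? :=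
    list_getElem?.comp fstM hidx
  -- the inner function
  have hg : Primrec₂ fun (a : Machine × Cfg2) (q : ℕ × Bool × Bool × Bool) =>
      ((q.1,
        (cond q.2.2.1 (peek a.2.2.1.2 :: a.2.2.1.1, a.2.2.1.2.tail)
          (a.2.2.1.1.tail, peek a.2.2.1.1 :: a.2.2.1.2)),
        (cond q.2.2.2 (q.2.1 :: a.2.2.2.1, a.2.2.2.2.tail)
          (a.2.2.2.1.tail, peek a.2.2.2.1 :: q.2.1 :: a.2.2.2.2.tail))) : Cfg2) := by
    have pa : Primrec fun p : (Machine × Cfg2) × ℕ × Bool × Bool × Bool => p.1 :=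
      fst
    have li' : Primrec fun p : (Machine × Cfg2) × ℕ × Bool × Bool × Bool => p.1.2.2.1.1 :=
      li.comp pa
    have ri' : Primrec fun p : (Machine × Cfg2) × ℕ × Bool × Bool × Bool => p.1.2.2.1.2 :=
      ri.comp pa
    have lw' : Primrec fun p : (Machine × Cfg2) × ℕ × Bool × Bool × Bool => p.1.2.2.2.1 :=
      lw.comp pa
    have rw'' : Primrec fun p : (Machine × Cfg2) × ℕ × Bool × Bool × Bool => p.1.2.2.2.2 :=
      rw'.comp pa
    have qs : Primrec fun p : (Machine × Cfg2) × ℕ × Bool × Bool × Bool => p.2.1 :=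
      fst.comp snd
    have qwr : Primrec fun p : (Machine × Cfg2) × ℕ × Bool × Bool × Bool => p.2.2.1 :=
      fst.comp (snd.comp snd)
    have qdi : Primrec fun p : (Machine × Cfg2) × ℕ × Bool × Bool × Bool => p.2.2.2.1 :=
      fst.comp (snd.comp (snd.comp snd))
    have qdw : Primrec fun p : (Machine × Cfg2) × ℕ × Bool × Bool × Bool => p.2.2.2.2 :=
      snd.comp (snd.comp (snd.comp snd))
    exact qs.pair <|
      (Primrec.cond qdi
        ((list_cons.comp (peek_primrec ri') li').pair (list_tail.comp ri'))
        ((list_tail.comp li').pair (list_cons.comp (peek_primrec li') ri'))).pair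
      (Primrec.cond qdw
        ((list_cons.comp qwr lw').pair (list_tail.comp rw''))
        ((list_tail.comp lw').pair
          (list_cons.comp (peek_primrec lw')
            (list_cons.comp qwr (list_tail.comp rw'')))))
  exact (Primrec.option_map hget hg).of_eq fun a => rfl

end Primrec

section Primrec2

open Primrec

theorem cfg2At_primrec (w : List Bool) (t : ℕ) : Primrec fun m : Machine => cfg2At m w t := by
  induction t with
  | zero => exact const _
  | succ t ih =>
    have : Primrec fun m : Machine => (cfg2At m w t).bind (step2 m) :=
      Primrec.option_bind ih step2_primrec
    exact this.of_eq fun m => rfl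

theorem isNone_primrec {α β : Type} [Primcodable α] [Primcodable β] {f : α → Option β}
    (hf : Primrec f) : Primrec fun a => (f a).isNone :=
  (Primrec.cond (Primrec.option_isSome.comp hf) (const false) (const true)).of_eq
    fun a => by rcases f a <;> rfl

theorem list_all_primrec {α β : Type} [Primcodable α] (L : List β) (f : β → α → Bool)
    (h : ∀ b ∈ L, Primrec (f b)) : Primrec fun a => L.all fun b => f b a := by
  induction L with
  | nil => exact (const true).of_eq fun a => rfl
  | cons b L ih =>
    have h1 : Primrec (f b) := h b List.mem_cons_self
    have h2 := ih fun b' hb' => h b' (List.mem_cons_of_mem _ hb')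
    exact (Primrec.cond h1 h2 (const false)).of_eq fun a => by
      rw [List.all_cons]; rcases f b a <;> rfl

theorem list_any_primrec {α β : Type} [Primcodable α] (L : List β) (f : β → α → Bool)
    (h : ∀ b ∈ L, Primrec (f b)) : Primrec fun a => L.any fun b => f b a := by
  induction L with
  | nil => exact (const false).of_eq fun a => rfl
  | cons b L ih =>
    have h1 : Primrec (f b) := h b List.mem_cons_self
    have h2 := ih fun b' hb' => h b' (List.mem_cons_of_mem _ hb')
    exact (Primrec.cond h1 (const true) h2).of_eq fun a => by
      rw [List.any_cons]; rcases f b a <;> rfl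

end Primrec2

/-! ### enumeration of words -/

def wordsLen : ℕ → List (List Bool)
  | 0 => [[]]
  | n + 1 => (wordsLen n).flatMap fun w => [false :: w, true :: w]

theorem mem_wordsLen {n : ℕ} {w : List Bool} : w ∈ wordsLen n ↔ w.length = n := by
  induction n generalizing w with
  | zero => simp [wordsLen, List.length_eq_zero_iff]
  | succ n ih =>
    simp only [wordsLen, List.mem_flatMap, List.mem_cons]
    constructor
    · rintro ⟨v, hv, h | h | h⟩ <;> simp_all [ih.1 hv]
    · intro h
      rcases w with _ | ⟨a, v⟩
      · simp at h
      · refine ⟨v, ih.2 (by simpa using h), ?_⟩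
        rcases a <;> simp

/-! ### reads of take and padding -/

theorem read_take (w : List Bool) (n : ℕ) {i : ℤ} (hi : i < (n : ℤ)) :
    read w i = read (w.take n) i := by
  rcases lt_or_ge i 0 with h | h
  · rw [read_neg _ h, read_neg _ h]
  · obtain ⟨j, rfl⟩ : ∃ j : ℕ, i = (j : ℤ) := ⟨i.toNat, (Int.toNat_of_nonneg h).symm⟩
    rw [read_natCast, read_natCast]
    have hj : j < n := by omega
    rcases lt_or_ge j w.length with h' | h'
    · rw [List.getD_eq_getElem?_getD, List.getD_eq_getElem?_getD,
        List.getElem?_take_of_lt hj, ]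
    · rw [List.getD_eq_default _ _ h', List.getD_eq_default]
      simp [h']

theorem read_take_mono (w : List Bool) (n : ℕ) (i : ℤ)
    (h : read (w.take n) i = true) : read w i = true := by
  rcases lt_or_ge i 0 with h0 | h0
  · rw [read_neg _ h0] at h; exact absurd h (by simp)
  · obtain ⟨j, rfl⟩ : ∃ j : ℕ, i = (j : ℤ) := ⟨i.toNat, (Int.toNat_of_nonneg h0).symm⟩
    rw [read_natCast] at h ⊢
    rcases lt_or_ge j (w.take n).length with h' | h'
    · have hj : j < n := by simp at h'; omega
      rw [List.getD_eq_getElem?_getD, List.getElem?_take_of_lt hj] at h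
      rw [List.getD_eq_getElem?_getD]
      exact h
    · rw [List.getD_eq_default _ _ h'] at h
      exact absurd h (by simp)

theorem read_pad (v : List Bool) (k : ℕ) (i : ℤ) :
    read (v ++ List.replicate k false) i = read v i := by
  rcases lt_or_ge i 0 with h0 | h0
  · rw [read_neg _ h0, read_neg _ h0]
  · obtain ⟨j, rfl⟩ : ∃ j : ℕ, i = (j : ℤ) := ⟨i.toNat, (Int.toNat_of_nonneg h0).symm⟩
    rw [read_natCast, read_natCast]
    rcases lt_or_ge j v.length with h' | h'
    · rw [List.getD_eq_getElem?_getD, List.getD_eq_getElem?_getD,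
        List.getElem?_append_left h']
    · rw [List.getD_eq_default _ _ h', List.getD_eq_getElem?_getD,
        List.getElem?_append_right h']
      rcases lt_or_ge (j - v.length) k with h'' | h''
      · simp [List.getElem?_replicate, h'']
      · rw [List.getElem?_eq_none (by simpa using h'')]
        rfl

end Stmt15

open Stmt15 Machine in
/-- If `T(n₀) < n₀ + 1` for some `n₀` (and `⌊T⌋` is computable and `m ≤ T(n)` is uniformly
decidable), then it is decidable whether a given Turing machine runs in time `T`. -/
theorem stmt_15 (T : ℕ → ℝ≥0) (n₀ : ℕ) (hT : T n₀ < (n₀ : ℝ≥0) + 1)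
    (hfloor : Computable fun n => ⌊T n⌋₊)
    (hdec : ComputablePred fun p : ℕ × ℕ => (p.1 : ℝ≥0) ≤ T p.2) :
    ComputablePred fun m : Machine => m.RunsInTime T := by
  classical
  rw [ComputablePred.computable_iff]
  refine ⟨fun m =>
    (((List.range (n₀+1)).flatMap wordsLen).all fun w =>
        (cfg2At m w (⌊T w.length⌋₊ + 1)).isNone)
      && ((wordsLen n₀).all fun v =>
        (List.range (n₀+1)).any fun s =>
          (decide (∀ n : ℕ, n₀ < n → (s : ℝ≥0) ≤ T n)) && (cfg2At m v (s+1)).isNone),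
    ?_, ?_⟩
  · -- computability
    apply Primrec.to_comp
    have h1 : Primrec fun m : Machine =>
        ((List.range (n₀+1)).flatMap wordsLen).all fun w =>
          (cfg2At m w (⌊T w.length⌋₊ + 1)).isNone :=
      list_all_primrec _ _ fun w _ => isNone_primrec (cfg2At_primrec w _)
    have h2 : Primrec fun m : Machine =>
        (wordsLen n₀).all fun v =>
          (List.range (n₀+1)).any fun s =>
            (decide (∀ n : ℕ, n₀ < n → (s : ℝ≥0) ≤ T n)) && (cfg2At m v (s+1)).isNone := by
      apply list_all_primrec
      intro v _
      apply list_any_primrec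
      intro s _
      exact (Primrec.cond (Primrec.const (decide (∀ n : ℕ, n₀ < n → (s : ℝ≥0) ≤ T n)))
        (isNone_primrec (cfg2At_primrec v _)) (Primrec.const false)).of_eq
        fun m => by rcases decide (∀ n : ℕ, n₀ < n → (s : ℝ≥0) ≤ T n) <;> rfl
    exact (Primrec.cond h1 h2 (Primrec.const false)).of_eq fun m => by
      rcases ((List.range (n₀+1)).flatMap wordsLen).all fun w =>
        (cfg2At m w (⌊T w.length⌋₊ + 1)).isNone <;> rfl
  · -- correctness
    funext m
    apply propext
    simp only [Bool.and_eq_true, List.all_eq_true, List.any_eq_true, List.mem_flatMap,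
      List.mem_range, Option.isNone_iff_eq_none, decide_eq_true_eq, mem_wordsLen]
    constructor
    · intro R
      constructor
      · rintro w ⟨n, hn, hw⟩
        obtain ⟨t, ht, hnone⟩ := R w
        rw [← cfgAt_none_iff]
        have htB : t ≤ ⌊T w.length⌋₊ := Nat.le_floor ht
        exact cfgAt_none_mono m w (by omega) hnone
      · intro v hv
        obtain ⟨t, ht, hnone⟩ := R v
        rw [hv] at ht
        have htn : t ≤ n₀ := by
          have h1 : (t : ℝ≥0) < ((n₀ + 1 : ℕ) : ℝ≥0) := by
            push_cast
            exact ht.trans_lt hT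
          have := Nat.cast_lt.mp h1
          omega
        have hex : ∃ s, cfgAt m v (s+1) = none := ⟨t, hnone⟩
        have hs₀t : Nat.find hex ≤ t := Nat.find_min' hex hnone
        refine ⟨Nat.find hex, by omega, ?_,
          by rw [← cfgAt_none_iff]; exact Nat.find_spec hex⟩
        intro n hn
        obtain ⟨t', ht', hnone'⟩ := R (v ++ List.replicate (n - n₀) false)
        have hlen : (v ++ List.replicate (n - n₀) false).length = n := by
          simp [hv]; omega
        rw [cfgAt_congr_read_all m _ v (read_pad v _)] at hnone'
        have hfind : Nat.find hex ≤ t' := Nat.find_min' hex hnone'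
        rw [hlen] at ht'
        calc ((Nat.find hex : ℕ) : ℝ≥0) ≤ (t' : ℝ≥0) := by exact_mod_cast hfind
          _ ≤ T n := ht'
    · rintro ⟨hA, hB2⟩ w
      rcases le_or_gt w.length n₀ with hle | hlt
      · have h := hA w ⟨w.length, by omega, rfl⟩
        rw [← cfgAt_none_iff] at h
        exact ⟨⌊T w.length⌋₊, Nat.floor_le (zero_le (a := T w.length)), h⟩
      · obtain ⟨s, hs, hΦ, hnone⟩ := hB2 (w.take n₀) (by simp; omega)
        rw [← cfgAt_none_iff] at hnone
        have hsn : s ≤ n₀ := by omega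
        have hw : cfgAt m w (s+1) = none := by
          rcases lt_or_eq_of_le hsn with h | h
          · rw [cfgAt_congr_read m w (w.take n₀) n₀
              (fun i hi => read_take w n₀ hi) (s+1) (by omega)]
            exact hnone
          · subst h
            have he : cfgAt m w s = cfgAt m (w.take s) s :=
              cfgAt_congr_read m w (w.take s) s (fun i hi => read_take w s hi) s le_rfl
            rw [Machine.cfgAt, he]
            rw [Machine.cfgAt] at hnone
            rcases hc : cfgAt m (w.take s) s with _ | d
            · rfl
            · rw [hc] at hnone
              simp only [Option.bind_some] at hnone ⊢
              exact step_none_mono m (w.take s) w (read_take_mono w s) d hnone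
        exact ⟨s, hΦ w.length hlt, hw⟩
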